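/- Let f(x,y) = a20*x^2 + a11*x*y + a02*y^2 + a10*x + a01*y + a00 be a polynomial with integer coefficients, let k ≥ 1 be an integer, and let b, c be integers with 2^k ∣ f(b,c). Then the number of pairs (i,j) with i ∈ {0,1} and j ∈ {0,1} such that 2^(k+1) ∣ f(b + 2^k·i, c + 2^k·j) is equal to 0, 2, or 4. -/

import Mathlib

/-- The `p = 2` case of the degree-2 splitting theorem: the number of children of a
`*`-labelled vertex `(b, c)` of the 2-adic valuation tree of the general degree-2
bivariate polynomial that are again labelled `*` is `0`, `2`, or `4`. -/
theorem degree_two_splitting_two_adic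
    (a20 a11 a02 a10 a01 a00 : ℤ) (k : ℕ) (hk : 1 ≤ k) (b c : ℤ)
    (f : ℤ → ℤ → ℤ)
    (hf : ∀ x y : ℤ, f x y =
      a20 * x ^ 2 + a11 * x * y + a02 * y ^ 2 + a10 * x + a01 * y + a00)
    (hdiv : (2 : ℤ) ^ k ∣ f b c) :
    ((Finset.range 2 ×ˢ Finset.range 2).filter
        (fun ij : ℕ × ℕ =>
          (2 : ℤ) ^ (k + 1) ∣ f (b + (2 : ℤ) ^ k * ij.1) (c + (2 : ℤ) ^ k * ij.2))).card = 0 ∨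
    ((Finset.range 2 ×ˢ Finset.range 2).filter
        (fun ij : ℕ × ℕ =>
          (2 : ℤ) ^ (k + 1) ∣ f (b + (2 : ℤ) ^ k * ij.1) (c + (2 : ℤ) ^ k * ij.2))).card = 2 ∨
    ((Finset.range 2 ×ˢ Finset.range 2).filter
        (fun ij : ℕ × ℕ =>
          (2 : ℤ) ^ (k + 1) ∣ f (b + (2 : ℤ) ^ k * ij.1) (c + (2 : ℤ) ^ k * ij.2))).card = 4 := by
  obtain ⟨k', rfl⟩ : ∃ k'', k = k'' + 1 := ⟨k - 1, (Nat.succ_pred_eq_of_pos hk).symm⟩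
  obtain ⟨m, hm⟩ := hdiv
  set A : ℤ := 2 * a20 * b + a11 * c + a10 with hA
  set B : ℤ := a11 * b + 2 * a02 * c + a01 with hB
  have hm2 : a20 * b ^ 2 + a11 * b * c + a02 * c ^ 2 + a10 * b + a01 * c + a00
      = 2 ^ (k' + 1) * m := by rw [← hf]; exact hm
  have key : ∀ i j : ℤ,
      ((2 : ℤ) ^ (k' + 1 + 1) ∣ f (b + 2 ^ (k' + 1) * i) (c + 2 ^ (k' + 1) * j)) ↔
      (2 ∣ m + i * A + j * B) := by
    intro i j
    have hval : f (b + 2 ^ (k' + 1) * i) (c + 2 ^ (k' + 1) * j)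
        = 2 ^ (k' + 1 + 1) * (2 ^ k' * (a20 * i ^ 2 + a11 * i * j + a02 * j ^ 2))
          + 2 ^ (k' + 1) * (m + i * A + j * B) := by
      rw [hf, hA, hB]
      linear_combination hm2
    rw [hval]
    rw [dvd_add_right ⟨_, rfl⟩]
    rw [pow_succ, mul_comm ((2:ℤ) ^ (k' + 1)) 2]
    constructor
    · rintro ⟨t, ht⟩
      refine ⟨t, ?_⟩
      have h2 : (2 : ℤ) ^ (k' + 1) ≠ 0 := by positivity
      have := ht
      exact mul_left_cancel₀ h2 (by linarith [ht])
    · rintro ⟨t, ht⟩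
      exact ⟨t, by rw [ht]; ring⟩
  have hset : (Finset.range 2 ×ˢ Finset.range 2)
      = ({((0:ℕ),(0:ℕ)), (0,1), (1,0), (1,1)} : Finset (ℕ × ℕ)) := by decide
  have hfc : ((Finset.range 2 ×ˢ Finset.range 2).filter
        (fun ij : ℕ × ℕ =>
          (2 : ℤ) ^ (k' + 1 + 1) ∣ f (b + (2 : ℤ) ^ (k' + 1) * ij.1) (c + (2 : ℤ) ^ (k' + 1) * ij.2)))
      = ((Finset.range 2 ×ˢ Finset.range 2).filter
        (fun ij : ℕ × ℕ => 2 ∣ m + (ij.1 : ℤ) * A + (ij.2 : ℤ) * B)) :=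
    Finset.filter_congr (fun x _ => by simpa using key (x.1 : ℤ) (x.2 : ℤ))
  rw [hfc, hset]
  simp only [Finset.filter_insert, Finset.filter_singleton, Nat.cast_zero, Nat.cast_one,
    zero_mul, one_mul, add_zero, zero_add]
  split_ifs with h1 h2 h3 h4 <;>
    first
      | (exfalso; omega)
      | (left; decide)
      | (right; left; decide)
      | (right; right; decide)
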